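/- Let t be a positive integer with t + 1 ≥ 3, let v = 4(t+1), m = ⌊(t+1)/5⌋, and m' = v − 20m (so m' ∈ {0, 4, 8, 12, 16}). Then there exists a balanced companion family on {1,…,v} whose worst-case total set discrepancy under magnitude-2 swaps is at most 26m + Δ, where Δ = −4, 4, 8, 12, 18 according as m' = 0, 4, 8, 12, 16, respectively. -/

import Mathlib

/-- An (indexed) balanced companion family on `{1,…,4(t+1)}`: pairwise disjoint
2-element subsets `S 1, …, S (2t+2)` of `{1,…,4(t+1)}` whose union is all of
`{1,…,4(t+1)}`, such that for each `i = 1,…,t+1` the companion sets `S (2i-1)`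
and `S (2i)` have equal element sums. -/
def IsBalancedCompanionFamily (t : ℕ) (S : ℕ → Finset ℕ) : Prop :=
  (∀ i ∈ Finset.Icc 1 (2*t+2), S i ⊆ Finset.Icc 1 (4*(t+1)) ∧ (S i).card = 2) ∧
  (∀ i ∈ Finset.Icc 1 (2*t+2), ∀ j ∈ Finset.Icc 1 (2*t+2),
    i ≠ j → Disjoint (S i) (S j)) ∧
  (Finset.Icc 1 (2*t+2)).biUnion S = Finset.Icc 1 (4*(t+1)) ∧
  ∀ i ∈ Finset.Icc 1 (t+1), (S (2*i-1)).sum id = (S (2*i)).sum id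

/-- A collection of popularity swaps of magnitude `p` on `{1,…,v}`: a permutation
`π` of `{1,…,v}` with `π ∘ π = id` and `|π i − i| ≤ p` for every `i ∈ {1,…,v}`. -/
def IsSwapCollection (v p : ℕ) (π : ℕ → ℕ) : Prop :=
  (∀ i ∈ Finset.Icc 1 v, π i ∈ Finset.Icc 1 v) ∧
  (∀ i ∈ Finset.Icc 1 v, π (π i) = i) ∧
  (∀ i ∈ Finset.Icc 1 v, |(π i : ℤ) - (i : ℤ)| ≤ (p : ℤ))

/-- The total set discrepancy of the family `S` under the swap collection `π`:
`∑_{i=1}^{t+1} |∑_{x ∈ S (2i-1)} π x − ∑_{x ∈ S (2i)} π x|`. -/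
def totalSetDiscrepancy (t : ℕ) (S : ℕ → Finset ℕ) (π : ℕ → ℕ) : ℤ :=
  ∑ i ∈ Finset.Icc 1 (t+1),
    |((S (2*i-1)).sum fun x => (π x : ℤ)) - ((S (2*i)).sum fun x => (π x : ℤ))|

def bPair : ℕ → ℕ := fun p => [0,0,1,0,0,1,1,2,2,1,3,2,2,3,3,4,4,3,4,4].getD p 0

def bSgn : ℕ → ℤ := fun p => [1,-1,1,-1,1,-1,-1,1,-1,1,1,-1,1,-1,-1,1,-1,1,-1,1].getD p 1

def tPair1 : ℕ → ℕ := fun p => [0,0,0,0].getD p 0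

def tSgn1 : ℕ → ℤ := fun p => [1,-1,-1,1].getD p 1

def tPair2 : ℕ → ℕ := fun p => [0,1,1,0,0,1,1,0].getD p 0

def tSgn2 : ℕ → ℤ := fun p => [1,1,-1,-1,-1,-1,1,1].getD p 1

def tPair3 : ℕ → ℕ := fun p => [0,0,1,0,0,1,1,2,2,1,2,2].getD p 0

def tSgn3 : ℕ → ℤ := fun p => [1,-1,1,-1,1,-1,-1,1,-1,1,-1,1].getD p 1

def tPair4 : ℕ → ℕ := fun p => [0,0,1,0,0,2,1,3,3,2,1,2,3,3,1,2].getD p 0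

def tSgn4 : ℕ → ℤ := fun p => [1,-1,1,-1,1,1,-1,1,-1,-1,-1,-1,-1,1,1,1].getD p 1

def tPair : ℕ → ℕ → ℕ := fun r => match r with | 1 => tPair1 | 2 => tPair2 | 3 => tPair3 | 4 => tPair4 | _ => fun _ => 0

def tSgn : ℕ → ℕ → ℤ := fun r => match r with | 1 => tSgn1 | 2 => tSgn2 | 3 => tSgn3 | 4 => tSgn4 | _ => fun _ => 1

def yB00 : List (List ℤ) := [[0,2,0,2,0,2,0,2,4,0,0,2,0,2,0,2,2,0,2,0],[4,0,0,0,0,2,0,2,4,0,0,2,0,2,0,2,2,0,2,0],[0,0,4,4,0,0,0,0,2,0,2,2,0,2,0,2,2,0,2,0],[2,0,2,0,4,0,0,0,2,0,2,2,0,2,0,2,2,0,2,0],[0,2,0,2,0,0,4,4,0,0,0,0,0,2,0,2,2,0,2,0],[4,0,0,0,0,0,4,4,0,0,0,0,0,2,0,2,2,0,2,0],[0,0,4,4,0,0,0,2,0,4,0,0,0,2,0,2,2,0,2,0],[2,0,2,0,4,0,0,2,0,4,0,0,0,2,0,2,2,0,2,0],[0,2,0,2,0,2,0,2,2,0,4,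4,0,0,0,0,0,2,0,2],[4,0,0,0,0,2,0,2,2,0,4,4,0,0,0,0,0,2,0,2],[0,0,4,4,0,0,0,0,0,0,4,4,0,0,0,0,0,2,0,2],[2,0,2,0,4,0,0,0,0,0,4,4,0,0,0,0,0,2,0,2],[0,2,0,2,0,0,4,4,0,0,2,0,4,0,0,0,0,2,0,2],[4,0,0,0,0,0,4,4,0,0,2,0,4,0,0,0,0,2,0,2],[0,0,4,4,0,0,0,2,0,2,0,2,4,0,0,0,0,2,0,2],[2,0,2,0,4,0,0,2,0,2,0,2,4,0,0,0,0,2,0,2],[0,2,0,2,0,2,0,2,4,0,0,2,0,0,4,4,0,0,0,0],[4,0,0,0,0,2,0,2,4,0,0,2,0,0,4,4,0,0,0,0],[0,0,4,4,0,0,0,0,2,0,2,2,0,0,4,4,0,0,0,0],[2,0,2,0,4,0,0,0,2,0,2,2,0,0,4,4,0,0,0,0],[0,2,0,2,0,0,4,4,0,0,0,0,0,0,4,4,0,0,0,0],[4,0,0,0,0,0,4,4,0,0,0,0,0,0,4,4,0,0,0,0],[0,0,4,4,0,0,0,2,0,4,0,0,0,0,4,4,0,0,0,0],[2,0,2,0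,4,0,0,2,0,4,0,0,0,0,4,4,0,0,0,0],[0,2,0,2,0,2,0,2,2,0,4,4,0,0,0,2,0,2,0,0],[4,0,0,0,0,2,0,2,2,0,4,4,0,0,0,2,0,2,0,0],[0,0,4,4,0,0,0,0,0,0,4,4,0,0,0,2,0,2,0,0],[2,0,2,0,4,0,0,0,0,0,4,4,0,0,0,2,0,2,0,0],[0,2,0,2,0,0,4,4,0,0,2,0,4,0,0,2,0,2,0,0],[4,0,0,0,0,0,4,4,0,0,2,0,4,0,0,2,0,2,0,0],[0,0,4,4,0,0,0,2,0,2,0,2,4,0,0,2,0,2,0,0],[2,0,2,0,4,0,0,2,0,2,0,2,4,0,0,2,0,2,0,0]]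

def yB01 : List (List ℤ) := [[0,2,0,2,0,2,0,2,4,0,0,2,0,2,0,2,2,0,2,0],[4,0,0,0,0,2,0,2,4,0,0,2,0,2,0,2,2,0,2,0],[0,0,4,4,0,0,0,0,2,0,2,2,0,2,0,2,2,0,2,0],[2,0,2,0,4,0,0,0,2,0,2,2,0,2,0,2,2,0,2,0],[0,2,0,2,0,0,4,4,0,0,0,0,0,2,0,2,2,0,2,0],[4,0,0,0,0,0,4,4,0,0,0,0,0,2,0,2,2,0,2,0],[0,0,4,4,0,0,0,2,0,4,0,0,0,2,0,2,2,0,2,0],[2,0,2,0,4,0,0,2,0,4,0,0,0,2,0,2,2,0,2,0],[0,2,0,2,0,2,0,2,2,0,4,4,0,0,0,0,0,4,2,0],[4,0,0,0,0,2,0,2,2,0,4,4,0,0,0,0,0,4,2,0],[0,0,4,4,0,0,0,0,0,0,4,4,0,0,0,0,0,4,2,0],[2,0,2,0,4,0,0,0,0,0,4,4,0,0,0,0,0,4,2,0],[0,2,0,2,0,0,4,4,0,0,2,0,4,0,0,0,0,4,2,0],[4,0,0,0,0,0,4,4,0,0,2,0,4,0,0,0,0,4,2,0],[0,0,4,4,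0,0,0,2,0,2,0,2,4,0,0,0,0,4,2,0],[2,0,2,0,4,0,0,2,0,2,0,2,4,0,0,0,0,4,2,0],[0,2,0,2,0,2,0,2,4,0,0,2,0,0,4,4,0,0,0,2],[4,0,0,0,0,2,0,2,4,0,0,2,0,0,4,4,0,0,0,2],[0,0,4,4,0,0,0,0,2,0,2,2,0,0,4,4,0,0,0,2],[2,0,2,0,4,0,0,0,2,0,2,2,0,0,4,4,0,0,0,2],[0,2,0,2,0,0,4,4,0,0,0,0,0,0,4,4,0,0,0,2],[4,0,0,0,0,0,4,4,0,0,0,0,0,0,4,4,0,0,0,2],[0,0,4,4,0,0,0,2,0,4,0,0,0,0,4,4,0,0,0,2],[2,0,2,0,4,0,0,2,0,4,0,0,0,0,4,4,0,0,0,2],[0,2,0,2,0,2,0,2,2,0,4,4,0,0,0,2,0,2,0,2],[4,0,0,0,0,2,0,2,2,0,4,4,0,0,0,2,0,2,0,2],[0,0,4,4,0,0,0,0,0,0,4,4,0,0,0,2,0,2,0,2],[2,0,2,0,4,0,0,0,0,0,4,4,0,0,0,2,0,2,0,2],[0,2,0,2,0,0,4,4,0,0,2,0,4,0,0,2,0,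2,0,2],[4,0,0,0,0,0,4,4,0,0,2,0,4,0,0,2,0,2,0,2],[0,0,4,4,0,0,0,2,0,2,0,2,4,0,0,2,0,2,0,2],[2,0,2,0,4,0,0,2,0,2,0,2,4,0,0,2,0,2,0,2]]

def yB02 : List (List ℤ) := [[0,2,0,2,0,2,0,2,4,0,0,2,0,2,0,2,2,0,4,0],[4,0,0,0,0,2,0,2,4,0,0,2,0,2,0,2,2,0,4,0],[0,0,4,4,0,0,0,0,2,0,2,2,0,2,0,2,2,0,4,0],[2,0,2,0,4,0,0,0,2,0,2,2,0,2,0,2,2,0,4,0],[0,2,0,2,0,0,4,4,0,0,0,0,0,2,0,2,2,0,4,0],[4,0,0,0,0,0,4,4,0,0,0,0,0,2,0,2,2,0,4,0],[0,0,4,4,0,0,0,2,0,4,0,0,0,2,0,2,2,0,4,0],[2,0,2,0,4,0,0,2,0,4,0,0,0,2,0,2,2,0,4,0],[0,2,0,2,0,2,0,2,2,0,4,4,0,0,0,0,0,4,4,0],[4,0,0,0,0,2,0,2,2,0,4,4,0,0,0,0,0,4,4,0],[0,0,4,4,0,0,0,0,0,0,4,4,0,0,0,0,0,4,4,0],[2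,0,2,0,4,0,0,0,0,0,4,4,0,0,0,0,0,4,4,0],[0,2,0,2,0,0,4,4,0,0,2,0,4,0,0,0,0,4,4,0],[4,0,0,0,0,0,4,4,0,0,2,0,4,0,0,0,0,4,4,0],[0,0,4,4,0,0,0,2,0,2,0,2,4,0,0,0,0,4,4,0],[2,0,2,0,4,0,0,2,0,2,0,2,4,0,0,0,0,4,4,0],[0,2,0,2,0,2,0,2,4,0,0,2,0,0,4,4,0,0,0,4],[4,0,0,0,0,2,0,2,4,0,0,2,0,0,4,4,0,0,0,4],[0,0,4,4,0,0,0,0,2,0,2,2,0,0,4,4,0,0,0,4],[2,0,2,0,4,0,0,0,2,0,2,2,0,0,4,4,0,0,0,4],[0,2,0,2,0,0,4,4,0,0,0,0,0,0,4,4,0,0,0,4],[4,0,0,0,0,0,4,4,0,0,0,0,0,0,4,4,0,0,0,4],[0,0,4,4,0,0,0,2,0,4,0,0,0,0,4,4,0,0,0,4],[2,0,2,0,4,0,0,2,0,4,0,0,0,0,4,4,0,0,0,4],[0,2,0,2,0,2,0,2,2,0,4,4,0,0,0,2,0,2,0,4],[4,0,0,0,0,2,0,2,2,0,4,4,0,0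,0,2,0,2,0,4],[0,0,4,4,0,0,0,0,0,0,4,4,0,0,0,2,0,2,0,4],[2,0,2,0,4,0,0,0,0,0,4,4,0,0,0,2,0,2,0,4],[0,2,0,2,0,0,4,4,0,0,2,0,4,0,0,2,0,2,0,4],[4,0,0,0,0,0,4,4,0,0,2,0,4,0,0,2,0,2,0,4],[0,0,4,4,0,0,0,2,0,2,0,2,4,0,0,2,0,2,0,4],[2,0,2,0,4,0,0,2,0,2,0,2,4,0,0,2,0,2,0,4]]

def yB10 : List (List ℤ) := [[2,2,0,2,0,2,0,2,4,0,0,2,0,2,0,2,2,0,2,0],[4,2,0,0,0,2,0,2,4,0,0,2,0,2,0,2,2,0,2,0],[2,0,4,4,0,0,0,0,2,0,2,2,0,2,0,2,2,0,2,0],[0,2,2,0,4,0,0,0,2,0,2,2,0,2,0,2,2,0,2,0],[2,2,0,2,0,0,4,4,0,0,0,0,0,2,0,2,2,0,2,0],[4,2,0,0,0,0,4,4,0,0,0,0,0,2,0,2,2,0,2,0],[2,0,4,4,0,0,0,2,0,4,0,0,0,2,0,2,2,0,2,0],[0,2,2,0,4,0,0,2,0,4,0,0,0,2,0,2,2,0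,2,0],[2,2,0,2,0,2,0,2,2,0,4,4,0,0,0,0,0,2,0,2],[4,2,0,0,0,2,0,2,2,0,4,4,0,0,0,0,0,2,0,2],[2,0,4,4,0,0,0,0,0,0,4,4,0,0,0,0,0,2,0,2],[0,2,2,0,4,0,0,0,0,0,4,4,0,0,0,0,0,2,0,2],[2,2,0,2,0,0,4,4,0,0,2,0,4,0,0,0,0,2,0,2],[4,2,0,0,0,0,4,4,0,0,2,0,4,0,0,0,0,2,0,2],[2,0,4,4,0,0,0,2,0,2,0,2,4,0,0,0,0,2,0,2],[0,2,2,0,4,0,0,2,0,2,0,2,4,0,0,0,0,2,0,2],[2,2,0,2,0,2,0,2,4,0,0,2,0,0,4,4,0,0,0,0],[4,2,0,0,0,2,0,2,4,0,0,2,0,0,4,4,0,0,0,0],[2,0,4,4,0,0,0,0,2,0,2,2,0,0,4,4,0,0,0,0],[0,2,2,0,4,0,0,0,2,0,2,2,0,0,4,4,0,0,0,0],[2,2,0,2,0,0,4,4,0,0,0,0,0,0,4,4,0,0,0,0],[4,2,0,0,0,0,4,4,0,0,0,0,0,0,4,4,0,0,0,0],[2,0,4,4,0,0,0,2,0,4,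0,0,0,0,4,4,0,0,0,0],[0,2,2,0,4,0,0,2,0,4,0,0,0,0,4,4,0,0,0,0],[2,2,0,2,0,2,0,2,2,0,4,4,0,0,0,2,0,2,0,0],[4,2,0,0,0,2,0,2,2,0,4,4,0,0,0,2,0,2,0,0],[2,0,4,4,0,0,0,0,0,0,4,4,0,0,0,2,0,2,0,0],[0,2,2,0,4,0,0,0,0,0,4,4,0,0,0,2,0,2,0,0],[2,2,0,2,0,0,4,4,0,0,2,0,4,0,0,2,0,2,0,0],[4,2,0,0,0,0,4,4,0,0,2,0,4,0,0,2,0,2,0,0],[2,0,4,4,0,0,0,2,0,2,0,2,4,0,0,2,0,2,0,0],[0,2,2,0,4,0,0,2,0,2,0,2,4,0,0,2,0,2,0,0]]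

def yB11 : List (List ℤ) := [[2,2,0,2,0,2,0,2,4,0,0,2,0,2,0,2,2,0,2,0],[4,2,0,0,0,2,0,2,4,0,0,2,0,2,0,2,2,0,2,0],[2,0,4,4,0,0,0,0,2,0,2,2,0,2,0,2,2,0,2,0],[0,2,2,0,4,0,0,0,2,0,2,2,0,2,0,2,2,0,2,0],[2,2,0,2,0,0,4,4,0,0,0,0,0,2,0,2,2,0,2,0],[4,2,0,0,0,0,4,4,0,0,0,0,0,2,0,2,2,0,2,0],[2,0,4,4,0,0,0,2,0,4,0,0,0,2,0,2,2,0,2,0],[0,2,2,0,4,0,0,2,0,4,0,0,0,2,0,2,2,0,2,0],[2,2,0,2,0,2,0,2,2,0,4,4,0,0,0,0,0,4,2,0],[4,2,0,0,0,2,0,2,2,0,4,4,0,0,0,0,0,4,2,0],[2,0,4,4,0,0,0,0,0,0,4,4,0,0,0,0,0,4,2,0],[0,2,2,0,4,0,0,0,0,0,4,4,0,0,0,0,0,4,2,0],[2,2,0,2,0,0,4,4,0,0,2,0,4,0,0,0,0,4,2,0],[4,2,0,0,0,0,4,4,0,0,2,0,4,0,0,0,0,4,2,0],[2,0,4,4,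0,0,0,2,0,2,0,2,4,0,0,0,0,4,2,0],[0,2,2,0,4,0,0,2,0,2,0,2,4,0,0,0,0,4,2,0],[2,2,0,2,0,2,0,2,4,0,0,2,0,0,4,4,0,0,0,2],[4,2,0,0,0,2,0,2,4,0,0,2,0,0,4,4,0,0,0,2],[2,0,4,4,0,0,0,0,2,0,2,2,0,0,4,4,0,0,0,2],[0,2,2,0,4,0,0,0,2,0,2,2,0,0,4,4,0,0,0,2],[2,2,0,2,0,0,4,4,0,0,0,0,0,0,4,4,0,0,0,2],[4,2,0,0,0,0,4,4,0,0,0,0,0,0,4,4,0,0,0,2],[2,0,4,4,0,0,0,2,0,4,0,0,0,0,4,4,0,0,0,2],[0,2,2,0,4,0,0,2,0,4,0,0,0,0,4,4,0,0,0,2],[2,2,0,2,0,2,0,2,2,0,4,4,0,0,0,2,0,2,0,2],[4,2,0,0,0,2,0,2,2,0,4,4,0,0,0,2,0,2,0,2],[2,0,4,4,0,0,0,0,0,0,4,4,0,0,0,2,0,2,0,2],[0,2,2,0,4,0,0,0,0,0,4,4,0,0,0,2,0,2,0,2],[2,2,0,2,0,0,4,4,0,0,2,0,4,0,0,2,0,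2,0,2],[4,2,0,0,0,0,4,4,0,0,2,0,4,0,0,2,0,2,0,2],[2,0,4,4,0,0,0,2,0,2,0,2,4,0,0,2,0,2,0,2],[0,2,2,0,4,0,0,2,0,2,0,2,4,0,0,2,0,2,0,2]]

def yB12 : List (List ℤ) := [[2,2,0,2,0,2,0,2,4,0,0,2,0,2,0,2,2,0,4,0],[4,2,0,0,0,2,0,2,4,0,0,2,0,2,0,2,2,0,4,0],[2,0,4,4,0,0,0,0,2,0,2,2,0,2,0,2,2,0,4,0],[0,2,2,0,4,0,0,0,2,0,2,2,0,2,0,2,2,0,4,0],[2,2,0,2,0,0,4,4,0,0,0,0,0,2,0,2,2,0,4,0],[4,2,0,0,0,0,4,4,0,0,0,0,0,2,0,2,2,0,4,0],[2,0,4,4,0,0,0,2,0,4,0,0,0,2,0,2,2,0,4,0],[0,2,2,0,4,0,0,2,0,4,0,0,0,2,0,2,2,0,4,0],[2,2,0,2,0,2,0,2,2,0,4,4,0,0,0,0,0,4,4,0],[4,2,0,0,0,2,0,2,2,0,4,4,0,0,0,0,0,4,4,0],[2,0,4,4,0,0,0,0,0,0,4,4,0,0,0,0,0,4,4,0],[0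,2,2,0,4,0,0,0,0,0,4,4,0,0,0,0,0,4,4,0],[2,2,0,2,0,0,4,4,0,0,2,0,4,0,0,0,0,4,4,0],[4,2,0,0,0,0,4,4,0,0,2,0,4,0,0,0,0,4,4,0],[2,0,4,4,0,0,0,2,0,2,0,2,4,0,0,0,0,4,4,0],[0,2,2,0,4,0,0,2,0,2,0,2,4,0,0,0,0,4,4,0],[2,2,0,2,0,2,0,2,4,0,0,2,0,0,4,4,0,0,0,4],[4,2,0,0,0,2,0,2,4,0,0,2,0,0,4,4,0,0,0,4],[2,0,4,4,0,0,0,0,2,0,2,2,0,0,4,4,0,0,0,4],[0,2,2,0,4,0,0,0,2,0,2,2,0,0,4,4,0,0,0,4],[2,2,0,2,0,0,4,4,0,0,0,0,0,0,4,4,0,0,0,4],[4,2,0,0,0,0,4,4,0,0,0,0,0,0,4,4,0,0,0,4],[2,0,4,4,0,0,0,2,0,4,0,0,0,0,4,4,0,0,0,4],[0,2,2,0,4,0,0,2,0,4,0,0,0,0,4,4,0,0,0,4],[2,2,0,2,0,2,0,2,2,0,4,4,0,0,0,2,0,2,0,4],[4,2,0,0,0,2,0,2,2,0,4,4,0,0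,0,2,0,2,0,4],[2,0,4,4,0,0,0,0,0,0,4,4,0,0,0,2,0,2,0,4],[0,2,2,0,4,0,0,0,0,0,4,4,0,0,0,2,0,2,0,4],[2,2,0,2,0,0,4,4,0,0,2,0,4,0,0,2,0,2,0,4],[4,2,0,0,0,0,4,4,0,0,2,0,4,0,0,2,0,2,0,4],[2,0,4,4,0,0,0,2,0,2,0,2,4,0,0,2,0,2,0,4],[0,2,2,0,4,0,0,2,0,2,0,2,4,0,0,2,0,2,0,4]]

def yB : ℕ → ℕ → ℕ → ℕ → ℤ := fun lo ro => match lo, ro with | 0,0 => fun c p => ((yB00).getD c []).getD p 0 | 0,1 => fun c p => ((yB01).getD c []).getD p 0 | 0,2 => fun c p => ((yB02).getD c []).getD p 0 | 1,0 => fun c p => ((yB10).getD c []).getD p 0 | 1,1 => fun c p => ((yB11).getD c []).getD p 0 | 1,2 => fun c p => ((yB12).getD c []).getD p 0 | _,_ => fun _ _ => 0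

def yT10 : List (List ℤ) := [[0,2,0,2],[4,0,0,0]]

def yT11 : List (List ℤ) := [[2,2,0,2],[4,2,0,0]]

def yT20 : List (List ℤ) := [[0,0,0,0,4,4,0,0],[2,0,4,0,0,2,0,0],[0,2,0,2,0,2,2,0],[4,4,0,0,0,0,0,0]]

def yT21 : List (List ℤ) := [[2,2,0,0,4,4,0,0],[0,2,4,0,0,2,0,0],[2,2,0,2,0,2,2,0],[4,4,0,0,0,0,0,0]]

def yT30 : List (List ℤ) := [[0,2,0,2,0,2,0,2,2,0,2,0],[4,0,0,0,0,2,0,2,2,0,2,0],[0,0,4,4,0,0,0,0,0,2,0,2],[2,0,2,0,4,0,0,0,0,2,0,2],[0,2,0,2,0,0,4,4,0,0,0,0],[4,0,0,0,0,0,4,4,0,0,0,0],[0,0,4,4,0,0,0,2,0,2,0,0],[2,0,2,0,4,0,0,2,0,2,0,0]]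

def yT31 : List (List ℤ) := [[2,2,0,2,0,2,0,2,2,0,2,0],[4,2,0,0,0,2,0,2,2,0,2,0],[2,0,4,4,0,0,0,0,0,2,0,2],[0,2,2,0,4,0,0,0,0,2,0,2],[2,2,0,2,0,0,4,4,0,0,0,0],[4,2,0,0,0,0,4,4,0,0,0,0],[2,0,4,4,0,0,0,2,0,2,0,0],[0,2,2,0,4,0,0,2,0,2,0,0]]

def yT40 : List (List ℤ) := [[0,2,0,4,0,0,2,0,0,0,0,4,4,0,0,0],[4,0,0,0,2,0,2,0,0,0,0,4,4,0,0,0],[0,0,4,4,0,0,0,0,2,0,2,2,0,2,2,0],[2,0,2,0,4,0,0,0,2,0,2,2,0,2,2,0],[0,2,0,2,0,2,0,2,2,0,2,0,4,0,0,0],[4,0,0,0,0,2,0,2,2,0,2,0,4,0,0,0],[0,0,2,0,2,4,0,0,4,0,0,0,2,0,0,0],[2,0,2,0,4,4,0,0,4,0,0,0,2,0,0,0],[0,2,0,4,0,0,2,0,2,0,2,0,2,4,0,0],[4,0,0,0,2,0,2,0,2,0,2,0,2,4,0,0],[0,0,4,4,0,0,0,2,0,2,0,2,0,2,0,2],[2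,0,2,0,4,0,0,2,0,2,0,2,0,2,0,2],[0,2,0,2,0,0,4,4,0,0,4,0,0,2,0,0],[4,0,0,0,0,0,4,4,0,0,4,0,0,2,0,0],[0,0,2,0,2,2,0,4,0,0,0,0,0,0,0,0],[2,0,2,0,2,0,2,4,0,0,0,0,0,0,0,0]]

def yT41 : List (List ℤ) := [[2,2,0,4,0,0,2,0,0,0,0,4,4,0,0,0],[4,2,0,0,2,0,2,0,0,0,0,4,4,0,0,0],[2,0,4,4,0,0,0,0,2,0,2,2,0,2,2,0],[0,2,2,0,4,0,0,0,2,0,2,2,0,2,2,0],[2,2,0,2,0,2,0,2,2,0,2,0,4,0,0,0],[4,2,0,0,0,2,0,2,2,0,2,0,4,0,0,0],[2,0,2,0,2,4,0,0,4,0,0,0,2,0,0,0],[0,2,2,0,4,4,0,0,4,0,0,0,2,0,0,0],[2,2,0,4,0,0,2,0,2,0,2,0,2,4,0,0],[4,2,0,0,2,0,2,0,2,0,2,0,2,4,0,0],[2,0,4,4,0,0,0,2,0,2,0,2,0,2,0,2],[0,2,2,0,4,0,0,2,0,2,0,2,0,2,0,2],[2,2,0,2,0,0,4,4,0,0,4,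0,0,2,0,0],[4,2,0,0,0,0,4,4,0,0,4,0,0,2,0,0],[2,0,2,0,2,2,0,4,0,0,0,0,0,0,0,0],[0,2,2,0,2,0,2,4,0,0,0,0,0,0,0,0]]

def yT : ℕ → ℕ → ℕ → ℕ → ℤ := fun r lo => match r, lo with | 1,0 => fun c p => ((yT10).getD c []).getD p 0 | 1,1 => fun c p => ((yT11).getD c []).getD p 0 | 2,0 => fun c p => ((yT20).getD c []).getD p 0 | 2,1 => fun c p => ((yT21).getD c []).getD p 0 | 3,0 => fun c p => ((yT30).getD c []).getD p 0 | 3,1 => fun c p => ((yT31).getD c []).getD p 0 | 4,0 => fun c p => ((yT40).getD c []).getD p 0 | 4,1 => fun c p => ((yT41).getD c []).getD p 0 | _,_ => fun _ _ => 0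

def bFst : Bool → ℕ → ℕ := fun pl u => (if pl then [1,3,8,11,16] else [2,6,9,14,17]).getD u 0

def bSnd : Bool → ℕ → ℕ := fun pl u => (if pl then [5,10,13,18,20] else [4,7,12,15,19]).getD u 0

def tFst1 : Bool → ℕ → ℕ := fun pl u => (if pl then [1] else [2]).getD u 0

def tSnd1 : Bool → ℕ → ℕ := fun pl u => (if pl then [4] else [3]).getD u 0

def tFst2 : Bool → ℕ → ℕ := fun pl u => (if pl then [1,2] else [4,3]).getD u 0

def tSnd2 : Bool → ℕ → ℕ := fun pl u => (if pl then [8,7] else [5,6]).getD u 0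

def tFst3 : Bool → ℕ → ℕ := fun pl u => (if pl then [1,3,8] else [2,6,9]).getD u 0

def tSnd3 : Bool → ℕ → ℕ := fun pl u => (if pl then [5,10,12] else [4,7,11]).getD u 0

def tFst4 : Bool → ℕ → ℕ := fun pl u => (if pl then [1,3,6,8] else [2,7,10,9]).getD u 0

def tSnd4 : Bool → ℕ → ℕ := fun pl u => (if pl then [5,15,16,14] else [4,11,12,13]).getD u 0

def tFst : ℕ → Bool → ℕ → ℕ := fun r => match r with | 1 => tFst1 | 2 => tFst2 | 3 => tFst3 | 4 => tFst4 | _ => fun _ _ => 0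

def tSnd : ℕ → Bool → ℕ → ℕ := fun r => match r with | 1 => tSnd1 | 2 => tSnd2 | 3 => tSnd3 | 4 => tSnd4 | _ => fun _ _ => 0

def lbit (c u : ℕ) : ℤ := if c / 2^u % 2 = 1 then 1 else -1

def wB : ℕ → ℕ → ℤ := fun lo ro => ([[22,24,26],[24,26,28]].getD lo []).getD ro 0

def wT : ℕ → ℕ → ℤ := fun r lo => ([[],[4,6],[8,12],[12,14],[18,20]].getD r []).getD lo 0

def edgeL : ℕ → ℕ := fun e => [18,19,19].getD e 0
def edgeR : ℕ → ℕ := fun e => [0,0,1].getD e 0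
def edgeD : ℕ → ℕ := fun e => [2,1,2].getD e 0
def rMap : ℕ → ℕ := fun k => [1,3,4].getD k 1

set_option maxRecDepth 100000
set_option synthInstance.maxHeartbeats 2000000
set_option synthInstance.maxSize 2000

theorem intraB : ∀ lo < 2, ∀ ro < 3, ∀ c < 32, ∀ p < 20, ∀ δ < 3, 1 ≤ δ → p + δ < 20 →
    ((δ:ℕ):ℤ) * (lbit c (bPair p) * bSgn p - lbit c (bPair ((p+δ:ℕ))) * bSgn ((p+δ:ℕ))) ≤
      yB lo ro c p + yB lo ro c ((p+δ:ℕ)) := by decide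

theorem intraT : ∀ k < 4, ∀ lo < 2, ∀ c < 2^(k+1), ∀ p < 16, ∀ δ < 3, 1 ≤ δ → p + δ < 4*(k+1) →
    ((δ:ℕ):ℤ) * (lbit c (tPair (k+1) p) * tSgn (k+1) p - lbit c (tPair (k+1) ((p+δ:ℕ))) * tSgn (k+1) ((p+δ:ℕ))) ≤
      yT (k+1) lo c p + yT (k+1) lo c ((p+δ:ℕ)) := by decide

theorem crossBB : ∀ lo < 2, ∀ cL < 32, ∀ ro < 3, ∀ cR < 32, ∀ e < 3,
    ((edgeD e : ℕ):ℤ) * (lbit cL (bPair (edgeL e)) * bSgn (edgeL e) -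
      lbit cR (bPair (edgeR e)) * bSgn (edgeR e)) ≤
      yB lo 1 cL (edgeL e) + yB 1 ro cR (edgeR e) := by decide

theorem crossBT : ∀ lo < 2, ∀ cL < 32, ∀ k < 3, ∀ cT < 2^(rMap k), ∀ e < 3,
    ((edgeD e : ℕ):ℤ) * (lbit cL (bPair (edgeL e)) * bSgn (edgeL e) -
      lbit cT (tPair (rMap k) (edgeR e)) * tSgn (rMap k) (edgeR e)) ≤
      yB lo 1 cL (edgeL e) + yT (rMap k) 1 cT (edgeR e) := by decide

theorem crossBT2 : ∀ lo < 2, ∀ cL < 32, ∀ cT < 4, ∀ e < 3,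
    ((edgeD e : ℕ):ℤ) * (lbit cL (bPair (edgeL e)) * bSgn (edgeL e) -
      lbit cT (tPair 2 (edgeR e)) * tSgn 2 (edgeR e)) ≤
      yB lo 2 cL (edgeL e) + yT 2 0 cT (edgeR e) := by decide

theorem nonnegB : ∀ lo < 2, ∀ ro < 3, ∀ c < 32, ∀ p < 20, 0 ≤ yB lo ro c p := by decide

theorem nonnegT : ∀ k < 4, ∀ lo < 2, ∀ c < 2^(k+1), ∀ p < 4*(k+1), 0 ≤ yT (k+1) lo c p := by decide

theorem sumYB : ∀ lo < 2, ∀ ro < 3, ∀ c < 32,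
    ∑ p ∈ Finset.range 20, yB lo ro c p ≤ wB lo ro := by decide

theorem sumYT : ∀ k < 4, ∀ lo < 2, ∀ c < 2^(k+1),
    ∑ p ∈ Finset.range (4*(k+1)), yT (k+1) lo c p ≤ wT (k+1) lo := by decide

theorem bPair_lt : ∀ p < 20, bPair p < 5 := by decide
theorem tPair_lt : ∀ k < 4, ∀ p < 4*(k+1), tPair (k+1) p < k+1 := by decide

theorem bstat : ∀ pl : Bool, ∀ u < 5,
    1 ≤ bFst pl u ∧ bFst pl u ≤ 20 ∧ 1 ≤ bSnd pl u ∧ bSnd pl u ≤ 20 ∧ bFst pl u ≠ bSnd pl u ∧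
    bPair (bFst pl u - 1) = u ∧ bPair (bSnd pl u - 1) = u ∧
    bSgn (bFst pl u - 1) = (if pl then 1 else -1) ∧
    bSgn (bSnd pl u - 1) = (if pl then 1 else -1) := by decide

theorem tstat : ∀ k < 4, ∀ pl : Bool, ∀ u < k+1,
    1 ≤ tFst (k+1) pl u ∧ tFst (k+1) pl u ≤ 4*(k+1) ∧ 1 ≤ tSnd (k+1) pl u ∧
    tSnd (k+1) pl u ≤ 4*(k+1) ∧ tFst (k+1) pl u ≠ tSnd (k+1) pl u ∧
    tPair (k+1) (tFst (k+1) pl u - 1) = u ∧ tPair (k+1) (tSnd (k+1) pl u - 1) = u ∧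
    tSgn (k+1) (tFst (k+1) pl u - 1) = (if pl then 1 else -1) ∧
    tSgn (k+1) (tSnd (k+1) pl u - 1) = (if pl then 1 else -1) := by decide

theorem bSumEq : ∀ u < 5, bFst true u + bSnd true u = bFst false u + bSnd false u := by decide
theorem tSumEq : ∀ k < 4, ∀ u < k+1,
    tFst (k+1) true u + tSnd (k+1) true u = tFst (k+1) false u + tSnd (k+1) false u := by decide

theorem bdisj : ∀ pl : Bool, ∀ pl' : Bool, ∀ u < 5, ∀ u' < 5, (u = u' ∧ pl = pl') ∨
    (bFst pl u ≠ bFst pl' u' ∧ bFst pl u ≠ bSnd pl' u' ∧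
    bSnd pl u ≠ bFst pl' u' ∧ bSnd pl u ≠ bSnd pl' u') := by decide

theorem tdisj : ∀ k < 4, ∀ pl : Bool, ∀ pl' : Bool, ∀ u < k+1, ∀ u' < k+1, (u = u' ∧ pl = pl') ∨
    (tFst (k+1) pl u ≠ tFst (k+1) pl' u' ∧ tFst (k+1) pl u ≠ tSnd (k+1) pl' u' ∧
    tSnd (k+1) pl u ≠ tFst (k+1) pl' u' ∧ tSnd (k+1) pl u ≠ tSnd (k+1) pl' u') := by decide


def famA (m r k : ℕ) : ℕ :=
  let pr := (k-1)/2
  let pl : Bool := (k-1) % 2 == 0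
  if pr < 5*m then 20*(pr/5) + bFst pl (pr%5) else 20*m + tFst r pl (pr-5*m)

def famB (m r k : ℕ) : ℕ :=
  let pr := (k-1)/2
  let pl : Bool := (k-1) % 2 == 0
  if pr < 5*m then 20*(pr/5) + bSnd pl (pr%5) else 20*m + tSnd r pl (pr-5*m)

def famS (m r : ℕ) (k : ℕ) : Finset ℕ := if k = 0 then ∅ else {famA m r k, famB m r k}

lemma kdecomp (k : ℕ) (hk : 1 ≤ k) : ∃ pr, ∃ pl : Bool,
    k = 2*pr + (if pl then 1 else 2) ∧ pr = (k-1)/2 := by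
  refine ⟨(k-1)/2, (k-1) % 2 == 0, ?_, rfl⟩
  by_cases h2 : (k-1) % 2 = 0 <;> simp [h2] <;> omega

lemma famAB_block (m r q u : ℕ) (pl : Bool) (k : ℕ) (hu : u < 5)
    (hk : k = 2*(5*q+u) + (if pl then 1 else 2)) (hq : q < m) :
    famA m r k = 20*q + bFst pl u ∧ famB m r k = 20*q + bSnd pl u := by
  have h1 : (k-1)/2 = 5*q+u := by rcases pl <;> simp at hk <;> omega
  have h2 : ((k-1) % 2 == 0) = pl := by
    rcases pl <;> simp [hk] <;> omega
  have h3 : (5*q+u)/5 = q := by omega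
  have h4 : (5*q+u)%5 = u := by omega
  constructor <;> simp only [famA, famB, h1, h2, h3, h4] <;> rw [if_pos (by omega)]

lemma famAB_tail (m r u : ℕ) (pl : Bool) (k : ℕ)
    (hk : k = 2*(5*m+u) + (if pl then 1 else 2)) :
    famA m r k = 20*m + tFst r pl u ∧ famB m r k = 20*m + tSnd r pl u := by
  have h1 : (k-1)/2 = 5*m+u := by rcases pl <;> simp at hk <;> omega
  have h2 : ((k-1) % 2 == 0) = pl := by
    rcases pl <;> simp [hk] <;> omega
  have h5 : 5*m+u-5*m = u := by omega
  constructor <;> simp only [famA, famB, h1, h2] <;> rw [if_neg (by omega)] <;> rw [h5]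

lemma famS_eq (m r k : ℕ) (hk : 1 ≤ k) : famS m r k = {famA m r k, famB m r k} := by
  simp only [famS, if_neg (by omega : ¬ k = 0)]

-- element facts: for k in range, the two elements with bounds
lemma fam_elts (m r t : ℕ) (hm : t+1 = 5*m+r) (hr : r < 5) (k : ℕ)
    (hk1 : 1 ≤ k) (hk2 : k ≤ 2*t+2) :
    famA m r k ≠ famB m r k ∧
    1 ≤ famA m r k ∧ famA m r k ≤ 20*m+4*r ∧ 1 ≤ famB m r k ∧ famB m r k ≤ 20*m+4*r := by
  obtain ⟨pr, pl, hk, hpr⟩ := kdecomp k hk1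
  have hprt : pr ≤ t := by rcases pl <;> simp at hk <;> omega
  by_cases hb : pr < 5*m
  · have hu5 : pr % 5 < 5 := by omega
    obtain ⟨hA, hB⟩ := famAB_block m r (pr/5) (pr%5) pl k hu5 (by rw [hk]; congr 1; omega)
      (by omega)
    obtain ⟨e1, e2, e3, e4, e5, _⟩ := bstat pl (pr%5) hu5
    have hq : pr/5 < m := by omega
    refine ⟨by omega, by omega, by omega, by omega, by omega⟩
  · have hu : pr - 5*m < r := by omega
    have hrr : r - 1 + 1 = r := by omega
    obtain ⟨hA, hB⟩ := famAB_tail m r (pr-5*m) pl k (by rw [hk]; congr 1; omega)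
    have := tstat (r-1) (by omega) pl (pr-5*m) (by omega)
    rw [hrr] at this
    obtain ⟨e1, e2, e3, e4, e5, _⟩ := this
    refine ⟨by omega, by omega, by omega, by omega, by omega⟩

lemma fam_disj (m r t : ℕ) (hm : t+1 = 5*m+r) (hr : r < 5) (i j : ℕ)
    (hi1 : 1 ≤ i) (hi2 : i ≤ 2*t+2) (hj1 : 1 ≤ j) (hj2 : j ≤ 2*t+2) (hij : i ≠ j) :
    Disjoint (famS m r i) (famS m r j) := by
  obtain ⟨pri, pli, hki, hpri⟩ := kdecomp i hi1
  obtain ⟨prj, plj, hkj, hprj⟩ := kdecomp j hj1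
  have hprit : pri ≤ t := by rcases pli <;> simp at hki <;> omega
  have hprjt : prj ≤ t := by rcases plj <;> simp at hkj <;> omega
  have hne : ¬ (pri = prj ∧ pli = plj) := by
    rintro ⟨h1, h2⟩; subst h1; subst h2; exact hij (by rw [hki, hkj])
  rw [famS_eq m r i hi1, famS_eq m r j hj1]
  have key : famA m r i ≠ famA m r j ∧ famA m r i ≠ famB m r j ∧
      famB m r i ≠ famA m r j ∧ famB m r i ≠ famB m r j := by
    by_cases hbi : pri < 5*m <;> by_cases hbj : prj < 5*m
    · obtain ⟨hAi, hBi⟩ := famAB_block m r (pri/5) (pri%5) pli i (by omega)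
        (by rw [hki]; congr 1; omega) (by omega)
      obtain ⟨hAj, hBj⟩ := famAB_block m r (prj/5) (prj%5) plj j (by omega)
        (by rw [hkj]; congr 1; omega) (by omega)
      obtain ⟨ei1, ei2, ei3, ei4, _⟩ := bstat pli (pri%5) (by omega)
      obtain ⟨ej1, ej2, ej3, ej4, _⟩ := bstat plj (prj%5) (by omega)
      by_cases hq : pri/5 = prj/5
      · rcases bdisj pli plj (pri%5) (by omega) (prj%5) (by omega) with ⟨h1, h2⟩ | ⟨h1,h2,h3,h4⟩
        · exact absurd ⟨by omega, h2⟩ hne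
        · refine ⟨by omega, by omega, by omega, by omega⟩
      · refine ⟨by omega, by omega, by omega, by omega⟩
    · obtain ⟨hAi, hBi⟩ := famAB_block m r (pri/5) (pri%5) pli i (by omega)
        (by rw [hki]; congr 1; omega) (by omega)
      obtain ⟨hAj, hBj⟩ := famAB_tail m r (prj-5*m) plj j (by rw [hkj]; congr 1; omega)
      obtain ⟨ei1, ei2, ei3, ei4, _⟩ := bstat pli (pri%5) (by omega)
      have hrr : r - 1 + 1 = r := by omega
      have htj := tstat (r-1) (by omega) plj (prj-5*m) (by omega)
      rw [hrr] at htj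
      obtain ⟨ej1, ej2, ej3, ej4, _⟩ := htj
      have hqi : pri/5 < m := by omega
      refine ⟨by omega, by omega, by omega, by omega⟩
    · obtain ⟨hAi, hBi⟩ := famAB_tail m r (pri-5*m) pli i (by rw [hki]; congr 1; omega)
      obtain ⟨hAj, hBj⟩ := famAB_block m r (prj/5) (prj%5) plj j (by omega)
        (by rw [hkj]; congr 1; omega) (by omega)
      have hrr : r - 1 + 1 = r := by omega
      have hti := tstat (r-1) (by omega) pli (pri-5*m) (by omega)
      rw [hrr] at hti
      obtain ⟨ei1, ei2, ei3, ei4, _⟩ := hti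
      obtain ⟨ej1, ej2, ej3, ej4, _⟩ := bstat plj (prj%5) (by omega)
      have hqj : prj/5 < m := by omega
      refine ⟨by omega, by omega, by omega, by omega⟩
    · obtain ⟨hAi, hBi⟩ := famAB_tail m r (pri-5*m) pli i (by rw [hki]; congr 1; omega)
      obtain ⟨hAj, hBj⟩ := famAB_tail m r (prj-5*m) plj j (by rw [hkj]; congr 1; omega)
      have hrr : r - 1 + 1 = r := by omega
      have hd := tdisj (r-1) (by omega) pli plj (pri-5*m) (by omega) (prj-5*m) (by omega)
      rw [hrr] at hd
      rcases hd with ⟨h1, h2⟩ | ⟨h1,h2,h3,h4⟩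
      · exact absurd ⟨by omega, h2⟩ hne
      · refine ⟨by omega, by omega, by omega, by omega⟩
  simp only [Finset.disjoint_insert_left, Finset.disjoint_singleton_left,
    Finset.mem_insert, Finset.mem_singleton]
  tauto

theorem fam_balanced (m r t : ℕ) (hm : t+1 = 5*m+r) (hr : r < 5) :
    IsBalancedCompanionFamily t (famS m r) := by
  have hv : 4*(t+1) = 20*m+4*r := by omega
  have hsub : ∀ i ∈ Finset.Icc 1 (2*t+2), famS m r i ⊆ Finset.Icc 1 (4*(t+1)) ∧
      (famS m r i).card = 2 := by
    intro i hi
    rw [Finset.mem_Icc] at hi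
    obtain ⟨hne, h1, h2, h3, h4⟩ := fam_elts m r t hm hr i hi.1 hi.2
    rw [famS_eq m r i hi.1]
    constructor
    · intro x hx
      simp only [Finset.mem_insert, Finset.mem_singleton] at hx
      rw [Finset.mem_Icc]
      rcases hx with h | h <;> omega
    · rw [Finset.card_pair hne]
  refine ⟨hsub, ?_, ?_, ?_⟩
  · intro i hi j hj hij
    rw [Finset.mem_Icc] at hi hj
    exact fam_disj m r t hm hr i j hi.1 hi.2 hj.1 hj.2 hij
  · apply Finset.eq_of_subset_of_card_le
    · intro x hx
      rw [Finset.mem_biUnion] at hx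
      obtain ⟨i, hi, hxi⟩ := hx
      exact (hsub i hi).1 hxi
    · have hcb : ((Finset.Icc 1 (2*t+2)).biUnion (famS m r)).card =
          ∑ i ∈ Finset.Icc 1 (2*t+2), (famS m r i).card := by
        apply Finset.card_biUnion
        intro i hi j hj hij
        rw [Finset.mem_coe, Finset.mem_Icc] at hi hj
        exact fam_disj m r t hm hr i j hi.1 hi.2 hj.1 hj.2 hij
      rw [hcb, Nat.card_Icc]
      have : ∑ i ∈ Finset.Icc 1 (2*t+2), (famS m r i).card =
          ∑ i ∈ Finset.Icc 1 (2*t+2), 2 := by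
        apply Finset.sum_congr rfl
        intro i hi
        exact (hsub i hi).2
      rw [this, Finset.sum_const, Nat.card_Icc, smul_eq_mul]
      omega
  · intro i hi
    rw [Finset.mem_Icc] at hi
    have hi1 : 1 ≤ i := hi.1
    have hk1 : (1:ℕ) ≤ 2*i-1 := by omega
    have hk2 : (1:ℕ) ≤ 2*i := by omega
    obtain ⟨hneA, _, _, _, _⟩ := fam_elts m r t hm hr (2*i-1) hk1 (by omega)
    obtain ⟨hneB, _, _, _, _⟩ := fam_elts m r t hm hr (2*i) hk2 (by omega)
    rw [famS_eq m r _ hk1, famS_eq m r _ hk2, Finset.sum_pair hneA, Finset.sum_pair hneB]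
    simp only [id]
    by_cases hb : i - 1 < 5*m
    · obtain ⟨hA1, hB1⟩ := famAB_block m r ((i-1)/5) ((i-1)%5) true (2*i-1) (by omega)
        (by simp; omega) (by omega)
      obtain ⟨hA2, hB2⟩ := famAB_block m r ((i-1)/5) ((i-1)%5) false (2*i) (by omega)
        (by simp; omega) (by omega)
      have := bSumEq ((i-1)%5) (by omega)
      omega
    · have hu : i - 1 - 5*m < r := by omega
      have hrr : r - 1 + 1 = r := by omega
      obtain ⟨hA1, hB1⟩ := famAB_tail m r (i-1-5*m) true (2*i-1) (by simp; omega)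
      obtain ⟨hA2, hB2⟩ := famAB_tail m r (i-1-5*m) false (2*i) (by simp; omega)
      have := tSumEq (r-1) (by omega) (i-1-5*m) (by omega)
      rw [hrr] at this
      omega


def gbit (σ : ℕ → ℤ) (i : ℕ) : ℕ := if σ i = 1 then 1 else 0

def codeB (σ : ℕ → ℤ) (q : ℕ) : ℕ :=
  gbit σ (5*q) + 2*gbit σ (5*q+1) + 4*gbit σ (5*q+2) + 8*gbit σ (5*q+3) + 16*gbit σ (5*q+4)

def codeT (σ : ℕ → ℤ) (m r : ℕ) : ℕ :=
  match r with
  | 1 => gbit σ (5*m)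
  | 2 => gbit σ (5*m) + 2*gbit σ (5*m+1)
  | 3 => gbit σ (5*m) + 2*gbit σ (5*m+1) + 4*gbit σ (5*m+2)
  | 4 => gbit σ (5*m) + 2*gbit σ (5*m+1) + 4*gbit σ (5*m+2) + 8*gbit σ (5*m+3)
  | _ => 0

def gA (m r : ℕ) (σ : ℕ → ℤ) (x : ℕ) : ℤ :=
  if (x-1)/20 < m then σ (5*((x-1)/20) + bPair ((x-1)%20)) * bSgn ((x-1)%20)
  else σ (5*m + tPair r (x-1-20*m)) * tSgn r (x-1-20*m)

def vlo (q : ℕ) : ℕ := if q = 0 then 0 else 1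
def vro (m r q : ℕ) : ℕ := if q+1 < m then 1 else if r = 0 then 0 else if r = 2 then 2 else 1
def vtlo (m r : ℕ) : ℕ := if m = 0 then 0 else if r = 2 then 0 else 1

def gY (m r : ℕ) (σ : ℕ → ℤ) (x : ℕ) : ℤ :=
  if (x-1)/20 < m then yB (vlo ((x-1)/20)) (vro m r ((x-1)/20)) (codeB σ ((x-1)/20)) ((x-1)%20)
  else yT r (vtlo m r) (codeT σ m r) (x-1-20*m)

set_option maxRecDepth 100000 in
theorem lbit_bits : ∀ b0 < 2, ∀ b1 < 2, ∀ b2 < 2, ∀ b3 < 2, ∀ b4 < 2, ∀ u < 5,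
    lbit (b0+2*b1+4*b2+8*b3+16*b4) u =
      [if b0 = 1 then (1:ℤ) else -1, if b1 = 1 then 1 else -1, if b2 = 1 then 1 else -1,
       if b3 = 1 then 1 else -1, if b4 = 1 then 1 else -1].getD u 0 := by decide

lemma gbit_lt (σ : ℕ → ℤ) (i : ℕ) : gbit σ i < 2 := by
  unfold gbit; split <;> norm_num

lemma gbit_spec (σ : ℕ → ℤ) (hσ : ∀ i, σ i = 1 ∨ σ i = -1) (i : ℕ) :
    (if gbit σ i = 1 then (1:ℤ) else -1) = σ i := by
  rcases hσ i with h | h <;> simp [gbit, h]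

lemma codeB_lt (σ : ℕ → ℤ) (q : ℕ) : codeB σ q < 32 := by
  have h0 := gbit_lt σ (5*q); have h1 := gbit_lt σ (5*q+1); have h2 := gbit_lt σ (5*q+2)
  have h3 := gbit_lt σ (5*q+3); have h4 := gbit_lt σ (5*q+4)
  unfold codeB; omega

lemma codeT_lt (σ : ℕ → ℤ) (m r : ℕ) (hr1 : 1 ≤ r) (hr : r < 5) : codeT σ m r < 2^r := by
  have h0 := gbit_lt σ (5*m); have h1 := gbit_lt σ (5*m+1); have h2 := gbit_lt σ (5*m+2)
  have h3 := gbit_lt σ (5*m+3)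
  interval_cases r <;> simp [codeT] <;> omega

lemma sigma_lbit_B (σ : ℕ → ℤ) (hσ : ∀ i, σ i = 1 ∨ σ i = -1) (q u : ℕ) (hu : u < 5) :
    lbit (codeB σ q) u = σ (5*q+u) := by
  have h := lbit_bits (gbit σ (5*q)) (gbit_lt σ _) (gbit σ (5*q+1)) (gbit_lt σ _)
    (gbit σ (5*q+2)) (gbit_lt σ _) (gbit σ (5*q+3)) (gbit_lt σ _)
    (gbit σ (5*q+4)) (gbit_lt σ _) u hu
  rw [show codeB σ q = gbit σ (5*q) + 2*gbit σ (5*q+1) + 4*gbit σ (5*q+2) + 8*gbit σ (5*q+3)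
    + 16*gbit σ (5*q+4) from rfl, h]
  interval_cases u
  · simpa using gbit_spec σ hσ (5*q)
  · simpa using gbit_spec σ hσ (5*q+1)
  · simpa using gbit_spec σ hσ (5*q+2)
  · simpa using gbit_spec σ hσ (5*q+3)
  · simpa using gbit_spec σ hσ (5*q+4)

lemma sigma_lbit_T (σ : ℕ → ℤ) (hσ : ∀ i, σ i = 1 ∨ σ i = -1) (m r u : ℕ)
    (hu : u < r) (hr : r < 5) : lbit (codeT σ m r) u = σ (5*m+u) := by
  have hz : (0:ℕ) < 2 := by norm_num
  have hb := gbit_lt σ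
  interval_cases r
  · omega
  · have h := lbit_bits (gbit σ (5*m)) (hb _) 0 hz 0 hz 0 hz 0 hz u (by omega)
    rw [show codeT σ m 1 = gbit σ (5*m) + 2*0+4*0+8*0+16*0 by simp [codeT], h]
    interval_cases u
    · simpa using gbit_spec σ hσ (5*m)
  · have h := lbit_bits (gbit σ (5*m)) (hb _) (gbit σ (5*m+1)) (hb _) 0 hz 0 hz 0 hz u (by omega)
    rw [show codeT σ m 2 = gbit σ (5*m) + 2*gbit σ (5*m+1) +4*0+8*0+16*0 by simp [codeT], h]
    interval_cases u
    · simpa using gbit_spec σ hσ (5*m)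
    · simpa using gbit_spec σ hσ (5*m+1)
  · have h := lbit_bits (gbit σ (5*m)) (hb _) (gbit σ (5*m+1)) (hb _) (gbit σ (5*m+2)) (hb _)
      0 hz 0 hz u (by omega)
    rw [show codeT σ m 3 = gbit σ (5*m) + 2*gbit σ (5*m+1) + 4*gbit σ (5*m+2) +8*0+16*0
      by simp [codeT], h]
    interval_cases u
    · simpa using gbit_spec σ hσ (5*m)
    · simpa using gbit_spec σ hσ (5*m+1)
    · simpa using gbit_spec σ hσ (5*m+2)
  · have h := lbit_bits (gbit σ (5*m)) (hb _) (gbit σ (5*m+1)) (hb _) (gbit σ (5*m+2)) (hb _)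
      (gbit σ (5*m+3)) (hb _) 0 hz u (by omega)
    rw [show codeT σ m 4 = gbit σ (5*m) + 2*gbit σ (5*m+1) + 4*gbit σ (5*m+2)
      + 8*gbit σ (5*m+3) +16*0 by simp [codeT], h]
    interval_cases u
    · simpa using gbit_spec σ hσ (5*m)
    · simpa using gbit_spec σ hσ (5*m+1)
    · simpa using gbit_spec σ hσ (5*m+2)
    · simpa using gbit_spec σ hσ (5*m+3)

lemma gA_block (m r : ℕ) (σ : ℕ → ℤ) (hσ : ∀ i, σ i = 1 ∨ σ i = -1) (x q p : ℕ)
    (hx : x-1 = 20*q+p) (hp : p < 20) (hq : q < m) :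
    gA m r σ x = lbit (codeB σ q) (bPair p) * bSgn p := by
  have h1 : (x-1)/20 = q := by omega
  have h2 : (x-1)%20 = p := by omega
  rw [gA, h1, h2, if_pos hq, sigma_lbit_B σ hσ q (bPair p) (bPair_lt p hp)]

lemma gA_tail (m r : ℕ) (σ : ℕ → ℤ) (hσ : ∀ i, σ i = 1 ∨ σ i = -1) (x p : ℕ)
    (hx : x-1 = 20*m+p) (hp : p < 4*r) (hr : r < 5) :
    gA m r σ x = lbit (codeT σ m r) (tPair r p) * tSgn r p := by
  have h1 : (x-1)/20 = m := by omega
  have h2 : x-1-20*m = p := by omega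
  have hrr : r - 1 + 1 = r := by omega
  have htp : tPair r p < r := by
    have := tPair_lt (r-1) (by omega) p (by omega)
    rwa [hrr] at this
  rw [gA, h1, if_neg (by omega), h2, sigma_lbit_T σ hσ m r (tPair r p) htp hr]

lemma gY_block (m r : ℕ) (σ : ℕ → ℤ) (x q p : ℕ)
    (hx : x-1 = 20*q+p) (hp : p < 20) (hq : q < m) :
    gY m r σ x = yB (vlo q) (vro m r q) (codeB σ q) p := by
  have h1 : (x-1)/20 = q := by omega
  have h2 : (x-1)%20 = p := by omega
  rw [gY, h1, h2, if_pos hq]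

lemma gY_tail (m r : ℕ) (σ : ℕ → ℤ) (x p : ℕ)
    (hx : x-1 = 20*m+p) (hp : p < 4*r) (hr : r < 5) :
    gY m r σ x = yT r (vtlo m r) (codeT σ m r) p := by
  have h1 : (x-1)/20 = m := by omega
  have h2 : x-1-20*m = p := by omega
  rw [gY, h1, if_neg (by omega), h2]


lemma vlo_lt (q : ℕ) : vlo q < 2 := by unfold vlo; split <;> norm_num
lemma vro_lt (m r q : ℕ) : vro m r q < 3 := by
  unfold vro; split; · norm_num
  split; · norm_num
  split <;> norm_num
lemma vtlo_lt (m r : ℕ) : vtlo m r < 2 := by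
  unfold vtlo; split; · norm_num
  split <;> norm_num

theorem cover (m r : ℕ) (σ : ℕ → ℤ) (hσ : ∀ i, σ i = 1 ∨ σ i = -1) (hr : r < 5)
    (x δ : ℕ) (hx1 : 1 ≤ x) (hδ : δ = 1 ∨ δ = 2) (hxv : x + δ ≤ 20*m + 4*r) :
    ((δ:ℕ):ℤ) * (gA m r σ x - gA m r σ (x+δ)) ≤ gY m r σ x + gY m r σ (x+δ) := by
  set q := (x-1)/20 with hqdef
  set p := (x-1)%20 with hpdef
  have hqp : x-1 = 20*q+p := by omega
  have hp : p < 20 := by omega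
  by_cases hqm : q < m
  · by_cases hin : p + δ < 20
    · rw [gA_block m r σ hσ x q p hqp hp hqm,
        gA_block m r σ hσ (x+δ) q (p+δ) (by omega) hin hqm,
        gY_block m r σ x q p hqp hp hqm,
        gY_block m r σ (x+δ) q (p+δ) (by omega) hin hqm]
      exact intraB (vlo q) (vlo_lt _)
        (vro m r q) (vro_lt _ _ _)
        (codeB σ q) (codeB_lt σ q) p hp δ (by omega) (by omega) (by omega)
    · -- crossing out of block q
      have hp' : p + δ - 20 < 2 := by omega
      have hx2 : (x+δ)-1 = 20*(q+1) + (p+δ-20) := by omega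
      by_cases hq1 : q+1 < m
      · -- block to block
        have hvro : vro m r q = 1 := by unfold vro; rw [if_pos hq1]
        have hvlo : vlo (q+1) = 1 := by unfold vlo; rw [if_neg (by omega)]
        rw [gA_block m r σ hσ x q p hqp hp hqm,
          gA_block m r σ hσ (x+δ) (q+1) (p+δ-20) hx2 (by omega) hq1,
          gY_block m r σ x q p hqp hp hqm,
          gY_block m r σ (x+δ) (q+1) (p+δ-20) hx2 (by omega) hq1, hvro, hvlo]
        have h18 : p = 18 ∧ δ = 2 ∨ p = 19 ∧ δ = 1 ∨ p = 19 ∧ δ = 2 := by omega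
        rcases h18 with ⟨hpv, hdv⟩ | ⟨hpv, hdv⟩ | ⟨hpv, hdv⟩
        · have h := crossBB (vlo q) (vlo_lt _) (codeB σ q) (codeB_lt σ q)
            (vro m r (q+1)) (vro_lt _ _ _)
            (codeB σ (q+1)) (codeB_lt σ (q+1)) 0 (by norm_num)
          simp only [edgeL, edgeR, edgeD, List.getD] at h
          rw [hpv, hdv]; norm_num at h ⊢; convert h using 2 <;> norm_num
        · have h := crossBB (vlo q) (vlo_lt _) (codeB σ q) (codeB_lt σ q)
            (vro m r (q+1)) (vro_lt _ _ _)
            (codeB σ (q+1)) (codeB_lt σ (q+1)) 1 (by norm_num)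
          simp only [edgeL, edgeR, edgeD, List.getD] at h
          rw [hpv, hdv]; norm_num at h ⊢; convert h using 2 <;> norm_num
        · have h := crossBB (vlo q) (vlo_lt _) (codeB σ q) (codeB_lt σ q)
            (vro m r (q+1)) (vro_lt _ _ _)
            (codeB σ (q+1)) (codeB_lt σ (q+1)) 2 (by norm_num)
          simp only [edgeL, edgeR, edgeD, List.getD] at h
          rw [hpv, hdv]; norm_num at h ⊢; convert h using 2 <;> norm_num
      · -- block to tail
        have hqm1 : q+1 = m := by omega
        have hpt : p + δ - 20 < 4*r := by omega
        have hr1 : 1 ≤ r := by omega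
        have hx2' : (x+δ)-1 = 20*m + (p+δ-20) := by omega
        rw [gA_block m r σ hσ x q p hqp hp hqm,
          gA_tail m r σ hσ (x+δ) (p+δ-20) hx2' hpt hr,
          gY_block m r σ x q p hqp hp hqm,
          gY_tail m r σ (x+δ) (p+δ-20) hx2' hpt hr]
        have h18 : p = 18 ∧ δ = 2 ∨ p = 19 ∧ δ = 1 ∨ p = 19 ∧ δ = 2 := by omega
        by_cases hr2 : r = 2
        · subst hr2
          have hvro : vro m 2 q = 2 := by unfold vro; rw [if_neg (by omega)]; norm_num
          have hvtlo : vtlo m 2 = 0 := by unfold vtlo; rw [if_neg (by omega)]; norm_num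
          rw [hvro, hvtlo]
          rcases h18 with ⟨hpv, hdv⟩ | ⟨hpv, hdv⟩ | ⟨hpv, hdv⟩
          · have h := crossBT2 (vlo q) (vlo_lt _) (codeB σ q)
              (codeB_lt σ q) (codeT σ m 2) (codeT_lt σ m 2 (by omega) (by omega)) 0 (by norm_num)
            simp only [edgeL, edgeR, edgeD, List.getD] at h
            rw [hpv, hdv]; norm_num at h ⊢; convert h using 2 <;> norm_num
          · have h := crossBT2 (vlo q) (vlo_lt _) (codeB σ q)
              (codeB_lt σ q) (codeT σ m 2) (codeT_lt σ m 2 (by omega) (by omega)) 1 (by norm_num)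
            simp only [edgeL, edgeR, edgeD, List.getD] at h
            rw [hpv, hdv]; norm_num at h ⊢; convert h using 2 <;> norm_num
          · have h := crossBT2 (vlo q) (vlo_lt _) (codeB σ q)
              (codeB_lt σ q) (codeT σ m 2) (codeT_lt σ m 2 (by omega) (by omega)) 2 (by norm_num)
            simp only [edgeL, edgeR, edgeD, List.getD] at h
            rw [hpv, hdv]; norm_num at h ⊢; convert h using 2 <;> norm_num
        · -- r ∈ {1,3,4}
          have hvro : vro m r q = 1 := by
            unfold vro; rw [if_neg (by omega), if_neg (by omega), if_neg hr2]
          have hvtlo : vtlo m r = 1 := by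
            unfold vtlo; rw [if_neg (by omega), if_neg hr2]
          rw [hvro, hvtlo]
          have hk : ∃ k, k < 3 ∧ rMap k = r := by
            have : r = 1 ∨ r = 3 ∨ r = 4 := by omega
            rcases this with h | h | h
            · exact ⟨0, by norm_num, by simp [rMap, h]⟩
            · exact ⟨1, by norm_num, by simp [rMap, h]⟩
            · exact ⟨2, by norm_num, by simp [rMap, h]⟩
          obtain ⟨k, hk3, hkr⟩ := hk
          rcases h18 with ⟨hpv, hdv⟩ | ⟨hpv, hdv⟩ | ⟨hpv, hdv⟩
          · have h := crossBT (vlo q) (vlo_lt _) (codeB σ q)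
              (codeB_lt σ q) k hk3 (codeT σ m r) (by rw [hkr]; exact codeT_lt σ m r hr1 hr)
              0 (by norm_num)
            rw [hkr] at h
            simp only [edgeL, edgeR, edgeD, List.getD] at h
            rw [hpv, hdv]; norm_num at h ⊢; convert h using 2 <;> norm_num
          · have h := crossBT (vlo q) (vlo_lt _) (codeB σ q)
              (codeB_lt σ q) k hk3 (codeT σ m r) (by rw [hkr]; exact codeT_lt σ m r hr1 hr)
              1 (by norm_num)
            rw [hkr] at h
            simp only [edgeL, edgeR, edgeD, List.getD] at h
            rw [hpv, hdv]; norm_num at h ⊢; convert h using 2 <;> norm_num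
          · have h := crossBT (vlo q) (vlo_lt _) (codeB σ q)
              (codeB_lt σ q) k hk3 (codeT σ m r) (by rw [hkr]; exact codeT_lt σ m r hr1 hr)
              2 (by norm_num)
            rw [hkr] at h
            simp only [edgeL, edgeR, edgeD, List.getD] at h
            rw [hpv, hdv]; norm_num at h ⊢; convert h using 2 <;> norm_num
  · -- both in tail
    have hr1 : 1 ≤ r := by omega
    have hrr : r - 1 + 1 = r := by omega
    have hpt : x-1-20*m < 4*r := by omega
    have hpt2 : (x+δ)-1 = 20*m + (x-1-20*m+δ) := by omega
    rw [gA_tail m r σ hσ x (x-1-20*m) (by omega) (by omega) hr,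
      gA_tail m r σ hσ (x+δ) (x-1-20*m+δ) hpt2 (by omega) hr,
      gY_tail m r σ x (x-1-20*m) (by omega) (by omega) hr,
      gY_tail m r σ (x+δ) (x-1-20*m+δ) hpt2 (by omega) hr]
    have h := intraT (r-1) (by omega) (vtlo m r)
      (vtlo_lt _ _)
      (codeT σ m r) (by rw [hrr]; exact codeT_lt σ m r hr1 hr)
      (x-1-20*m) (by omega) δ (by omega) (by omega) (by omega)
    rw [hrr] at h
    exact h


lemma sum_Icc_eq (f : ℕ → ℤ) (n : ℕ) :
    ∑ x ∈ Finset.Icc 1 n, f x = ∑ i ∈ Finset.range n, f (i+1) := by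
  induction n with
  | zero => simp
  | succ n ih => rw [Finset.sum_Icc_succ_top (by omega), ih, Finset.sum_range_succ]

lemma sum_range_blocks (f : ℕ → ℤ) (m : ℕ) :
    ∑ i ∈ Finset.range (20*m), f i
      = ∑ q ∈ Finset.range m, ∑ p ∈ Finset.range 20, f (20*q+p) := by
  induction m with
  | zero => simp
  | succ m ih =>
    rw [show 20*(m+1) = 20*m + 20 by ring, Finset.sum_range_add, ih,
      Finset.sum_range_succ (fun q => ∑ p ∈ Finset.range 20, f (20*q+p)) m]

def dval : ℕ → ℤ := fun r => [-4,4,8,12,18].getD r 0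

lemma blockW (m r q : ℕ) (hq : q < m) :
    wB (vlo q) (vro m r q) ≤ 26 - (if q = 0 then 2 else 0)
      + (if q+1 = m then (if r = 0 then -2 else if r = 2 then 2 else 0) else 0) := by
  unfold vlo vro
  by_cases h0 : q = 0 <;> by_cases h1 : q+1 < m <;>
    by_cases hr0 : r = 0 <;> by_cases hr2 : r = 2 <;>
    simp only [h0, h1, hr0, hr2, if_true, if_false, if_pos, if_neg] <;>
    first
    | (rw [if_pos (by omega)] ; norm_num [wB] <;> omega)
    | (rw [if_neg (by omega)] ; norm_num [wB] <;> omega)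
    | (norm_num [wB] <;> omega)

lemma sumW (m r : ℕ) (hm1 : 1 ≤ m) :
    ∑ q ∈ Finset.range m, wB (vlo q) (vro m r q)
      ≤ 26*m - 2 + (if r = 0 then -2 else if r = 2 then 2 else 0) := by
  have h1 : ∑ q ∈ Finset.range m, wB (vlo q) (vro m r q)
      ≤ ∑ q ∈ Finset.range m, (26 - (if q = 0 then 2 else 0)
        + (if q+1 = m then (if r = 0 then -2 else if r = 2 then 2 else 0) else 0)) :=
    Finset.sum_le_sum (fun q hq => blockW m r q (Finset.mem_range.mp hq))
  refine h1.trans ?_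
  rw [Finset.sum_add_distrib, Finset.sum_sub_distrib, Finset.sum_const]
  have h2 : ∑ q ∈ Finset.range m, (if q = 0 then (2:ℤ) else 0) = 2 := by
    rw [Finset.sum_ite_eq' (Finset.range m) 0 (fun _ => (2:ℤ))]
    rw [if_pos (Finset.mem_range.mpr (by omega))]
  have h3 : ∑ q ∈ Finset.range m,
      (if q+1 = m then (if r = 0 then (-2:ℤ) else if r = 2 then 2 else 0) else 0)
      = (if r = 0 then (-2:ℤ) else if r = 2 then 2 else 0) := by
    have hc : ∀ q ∈ Finset.range m,
        (if q+1 = m then (if r = 0 then (-2:ℤ) else if r = 2 then 2 else 0) else 0)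
        = (if q = m-1 then (if r = 0 then (-2:ℤ) else if r = 2 then 2 else 0) else 0) := by
      intro q hq
      rw [Finset.mem_range] at hq
      simp only [show (q+1 = m) ↔ (q = m-1) by omega]
    rw [Finset.sum_congr rfl hc,
      Finset.sum_ite_eq' (Finset.range m) (m-1) (fun _ => (if r = 0 then (-2:ℤ) else if r = 2 then 2 else 0))]
    rw [if_pos (Finset.mem_range.mpr (by omega))]
  rw [h2, h3, nsmul_eq_mul, Finset.card_range]
  push_cast
  linarith

theorem sumYbound (m r : ℕ) (σ : ℕ → ℤ) (hr : r < 5) (hok : 1 ≤ m ∨ 3 ≤ r) :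
    ∑ x ∈ Finset.Icc 1 (20*m+4*r), gY m r σ x ≤ 26*m + dval r := by
  rw [sum_Icc_eq, Finset.sum_range_add, sum_range_blocks (fun i => gY m r σ (i+1)) m]
  have hblock : ∀ q ∈ Finset.range m,
      ∑ p ∈ Finset.range 20, gY m r σ (20*q+p+1) ≤ wB (vlo q) (vro m r q) := by
    intro q hq
    rw [Finset.mem_range] at hq
    have he : ∀ p ∈ Finset.range 20, gY m r σ (20*q+p+1)
        = yB (vlo q) (vro m r q) (codeB σ q) p := by
      intro p hp
      rw [Finset.mem_range] at hp
      exact gY_block m r σ (20*q+p+1) q p (by omega) hp hq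
    rw [Finset.sum_congr rfl he]
    exact sumYB (vlo q) (vlo_lt q) (vro m r q) (vro_lt m r q) (codeB σ q) (codeB_lt σ q)
  have htail : ∑ i ∈ Finset.range (4*r), gY m r σ (20*m+i+1)
      ≤ (if r = 0 then 0 else wT r (vtlo m r)) := by
    by_cases hr0 : r = 0
    · subst hr0; simp
    · rw [if_neg hr0]
      have hrr : r - 1 + 1 = r := by omega
      have he : ∀ p ∈ Finset.range (4*r), gY m r σ (20*m+p+1)
          = yT r (vtlo m r) (codeT σ m r) p := by
        intro p hp
        rw [Finset.mem_range] at hp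
        exact gY_tail m r σ (20*m+p+1) p (by omega) hp hr
      rw [Finset.sum_congr rfl he]
      have h := sumYT (r-1) (by omega) (vtlo m r) (vtlo_lt m r) (codeT σ m r)
        (by rw [hrr]; exact codeT_lt σ m r (by omega) hr)
      rw [hrr] at h
      exact h
  have h1 : ∑ q ∈ Finset.range m, ∑ p ∈ Finset.range 20, gY m r σ (20*q+p+1)
      ≤ ∑ q ∈ Finset.range m, wB (vlo q) (vro m r q) := Finset.sum_le_sum hblock
  by_cases hm0 : m = 0
  · subst hm0
    have hr3 : 3 ≤ r := by omega
    simp only [Finset.range_zero, Finset.sum_empty, zero_add]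
    have : (if r = 0 then (0:ℤ) else wT r (vtlo 0 r)) ≤ 26*0 + dval r := by
      interval_cases r <;> norm_num [wT, vtlo, dval]
    calc ∑ i ∈ Finset.range (4*r), gY 0 r σ (20*0+i+1)
        ≤ _ := by simpa using htail
      _ ≤ _ := this
  · have hm1 : 1 ≤ m := by omega
    have h2 := sumW m r hm1
    have h3 : (26*m - 2 + (if r = 0 then (-2:ℤ) else if r = 2 then 2 else 0))
        + (if r = 0 then 0 else wT r (vtlo m r)) ≤ 26*m + dval r := by
      have hvt : vtlo m r = if r = 2 then 0 else 1 := by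
        unfold vtlo; rw [if_neg hm0]
      rw [hvt]
      interval_cases r <;> (norm_num [wT, dval]) <;> omega
    calc _ ≤ (∑ q ∈ Finset.range m, wB (vlo q) (vro m r q))
          + (if r = 0 then 0 else wT r (vtlo m r)) := add_le_add h1 htail
      _ ≤ _ := by linarith


lemma sum_pair_split (n : ℕ) (G : ℕ → ℤ) :
    ∑ k ∈ Finset.Icc 1 (2*n), G k = ∑ i ∈ Finset.Icc 1 n, (G (2*i-1) + G (2*i)) := by
  induction n with
  | zero => simp
  | succ n ih =>
    rw [show 2*(n+1) = (2*n+1)+1 by ring, Finset.sum_Icc_succ_top (by omega),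
      Finset.sum_Icc_succ_top (by omega), ih,
      Finset.sum_Icc_succ_top (by omega : 1 ≤ n+1)]
    have e1 : 2*(n+1)-1 = 2*n+1 := by omega
    rw [e1, show 2*(n+1) = 2*n+1+1 by ring]
    ring

def ddef (π : ℕ → ℕ) : ℕ → ℤ := fun x => (π x : ℤ) - x

def Dval (m r : ℕ) (π : ℕ → ℕ) (pr : ℕ) : ℤ :=
  (∑ x ∈ famS m r (2*pr+1), ddef π x) - ∑ x ∈ famS m r (2*pr+2), ddef π x

def sgn (m r : ℕ) (π : ℕ → ℕ) (pr : ℕ) : ℤ := if 0 ≤ Dval m r π pr then 1 else -1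

lemma sgn_pm (m r : ℕ) (π : ℕ → ℕ) : ∀ i, sgn m r π i = 1 ∨ sgn m r π i = -1 := by
  intro i; unfold sgn; split <;> simp

lemma gY_nonneg (m r : ℕ) (σ : ℕ → ℤ) (hr : r < 5) (x : ℕ) (hx1 : 1 ≤ x)
    (hx2 : x ≤ 20*m+4*r) : 0 ≤ gY m r σ x := by
  by_cases hq : (x-1)/20 < m
  · rw [gY_block m r σ x ((x-1)/20) ((x-1)%20) (by omega) (by omega) hq]
    exact nonnegB _ (vlo_lt _) _ (vro_lt _ _ _) _ (codeB_lt σ _) _ (by omega)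
  · have hr1 : 1 ≤ r := by omega
    have hrr : r-1+1 = r := by omega
    rw [gY_tail m r σ x (x-1-20*m) (by omega) (by omega) hr]
    have h := nonnegT (r-1) (by omega) (vtlo m r) (vtlo_lt m r) (codeT σ m r)
      (by rw [hrr]; exact codeT_lt σ m r hr1 hr) (x-1-20*m) (by omega)
    rw [hrr] at h; exact h

lemma gA_on_fam (m r t : ℕ) (π : ℕ → ℕ) (hm : t+1 = 5*m+r) (hr : r < 5)
    (pr : ℕ) (hpr : pr ≤ t) (pl : Bool) (x : ℕ)
    (hx : x ∈ famS m r (2*pr + (if pl then 1 else 2))) :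
    gA m r (sgn m r π) x = sgn m r π pr * (if pl then 1 else -1) := by
  set k := 2*pr + (if pl then 1 else 2) with hk
  have hk1 : 1 ≤ k := by rcases pl <;> simp [hk]
  rw [famS_eq m r k hk1, Finset.mem_insert, Finset.mem_singleton] at hx
  by_cases hb : pr < 5*m
  · obtain ⟨hA, hB⟩ := famAB_block m r (pr/5) (pr%5) pl k (by omega)
      (by rw [hk]; congr 1; omega) (by omega)
    obtain ⟨e1,e2,e3,e4,e5,f2,f2',f3,f3'⟩ := bstat pl (pr%5) (by omega)
    have hqq : 5*(pr/5) + pr%5 = pr := by omega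
    rcases hx with hx | hx
    · rw [hx, hA, gA, show (20*(pr/5) + bFst pl (pr%5) - 1)/20 = pr/5 by omega,
        show (20*(pr/5) + bFst pl (pr%5) - 1)%20 = bFst pl (pr%5) - 1 by omega,
        if_pos (by omega), f2, hqq, f3]
    · rw [hx, hB, gA, show (20*(pr/5) + bSnd pl (pr%5) - 1)/20 = pr/5 by omega,
        show (20*(pr/5) + bSnd pl (pr%5) - 1)%20 = bSnd pl (pr%5) - 1 by omega,
        if_pos (by omega), f2', hqq, f3']
  · have hrr : r-1+1 = r := by omega
    obtain ⟨hA, hB⟩ := famAB_tail m r (pr-5*m) pl k (by rw [hk]; congr 1; omega)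
    have hts := tstat (r-1) (by omega) pl (pr-5*m) (by omega)
    rw [hrr] at hts
    obtain ⟨e1,e2,e3,e4,e5,f2,f2',f3,f3'⟩ := hts
    have hmm : 5*m + (pr-5*m) = pr := by omega
    rcases hx with hx | hx
    · rw [hx, hA, gA, show (20*m + tFst r pl (pr-5*m) - 1)/20 = m by omega,
        if_neg (by omega),
        show 20*m + tFst r pl (pr-5*m) - 1 - 20*m = tFst r pl (pr-5*m) - 1 by omega,
        f2, hmm, f3]
    · rw [hx, hB, gA, show (20*m + tSnd r pl (pr-5*m) - 1)/20 = m by omega,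
        if_neg (by omega),
        show 20*m + tSnd r pl (pr-5*m) - 1 - 20*m = tSnd r pl (pr-5*m) - 1 by omega,
        f2', hmm, f3']

lemma pairTerm (m r t : ℕ) (π : ℕ → ℕ) (hm : t+1 = 5*m+r) (hr : r < 5)
    (hsum : ∀ i ∈ Finset.Icc 1 (t+1), (famS m r (2*i-1)).sum id = (famS m r (2*i)).sum id)
    (i : ℕ) (hi : i ∈ Finset.Icc 1 (t+1)) :
    |((famS m r (2*i-1)).sum fun x => (π x:ℤ)) - ((famS m r (2*i)).sum fun x => (π x:ℤ))|
      = (∑ x ∈ famS m r (2*i-1), gA m r (sgn m r π) x * ddef π x)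
        + ∑ x ∈ famS m r (2*i), gA m r (sgn m r π) x * ddef π x := by
  have hii := Finset.mem_Icc.mp hi
  have h1 : 2*i-1 = 2*(i-1)+1 := by omega
  have h2 : 2*i = 2*(i-1)+2 := by omega
  have hcast : ((famS m r (2*i-1)).sum fun x => ((x:ℕ):ℤ))
      = (famS m r (2*i)).sum fun x => ((x:ℕ):ℤ) := by
    have h := hsum i hi
    simp only [id] at h
    have h2 := congrArg (Nat.cast : ℕ → ℤ) h
    push_cast at h2
    exact h2
  have hD : ((famS m r (2*i-1)).sum fun x => (π x:ℤ))
        - ((famS m r (2*i)).sum fun x => (π x:ℤ)) = Dval m r π (i-1) := by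
    unfold Dval ddef
    rw [← h1, ← h2, Finset.sum_sub_distrib, Finset.sum_sub_distrib]
    push_cast at hcast ⊢
    linarith [hcast]
  rw [hD]
  have habs : |Dval m r π (i-1)| = sgn m r π (i-1) * Dval m r π (i-1) := by
    unfold sgn; split
    · rw [one_mul, abs_of_nonneg ‹_›]
    · rw [neg_one_mul, abs_of_neg (by omega)]
  rw [habs]
  have hplus : ∀ x ∈ famS m r (2*(i-1)+1), gA m r (sgn m r π) x = sgn m r π (i-1) := by
    intro x hx
    have h := gA_on_fam m r t π hm hr (i-1) (by omega) true x (by simpa using hx)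
    simpa using h
  have hminus : ∀ x ∈ famS m r (2*(i-1)+2), gA m r (sgn m r π) x = -sgn m r π (i-1) := by
    intro x hx
    have h := gA_on_fam m r t π hm hr (i-1) (by omega) false x (by simpa using hx)
    simp at h
    linarith [h]
  rw [h1, h2]
  rw [Finset.sum_congr rfl (fun x hx => by rw [hplus x hx] :
        ∀ x ∈ famS m r (2*(i-1)+1), gA m r (sgn m r π) x * ddef π x
          = sgn m r π (i-1) * ddef π x),
      Finset.sum_congr rfl (fun x hx => by rw [hminus x hx] :
        ∀ x ∈ famS m r (2*(i-1)+2), gA m r (sgn m r π) x * ddef π x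
          = -sgn m r π (i-1) * ddef π x)]
  unfold Dval
  rw [← Finset.mul_sum, ← Finset.mul_sum]
  ring


/-- Let `t + 1 ≥ 3`, `v = 4(t+1)`, `m = ⌊(t+1)/5⌋`, `m' = v − 20m`. Then there is a
balanced companion family on `{1,…,v}` whose worst-case total set discrepancy under
magnitude-2 swaps is at most `26m + Δ`, where `Δ = −4, 4, 8, 12, 18` according as
`m' = 0, 4, 8, 12, 16`. -/
theorem concatenated_family_discrepancy_p2 (t : ℕ) (ht : 3 ≤ t + 1) (Δ : ℤ)
    (hΔ : (4*(t+1) - 20*((t+1)/5) = 0 ∧ Δ = -4) ∨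
          (4*(t+1) - 20*((t+1)/5) = 4 ∧ Δ = 4) ∨
          (4*(t+1) - 20*((t+1)/5) = 8 ∧ Δ = 8) ∨
          (4*(t+1) - 20*((t+1)/5) = 12 ∧ Δ = 12) ∨
          (4*(t+1) - 20*((t+1)/5) = 16 ∧ Δ = 18)) :
    ∃ S : ℕ → Finset ℕ, IsBalancedCompanionFamily t S ∧
      ∀ π : ℕ → ℕ, IsSwapCollection (4*(t+1)) 2 π →
        totalSetDiscrepancy t S π ≤ 26 * (((t+1)/5 : ℕ) : ℤ) + Δ := by
  set m := (t+1)/5 with hmdef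
  set r := (t+1)%5 with hrdef
  have hm : t+1 = 5*m + r := by omega
  have hr5 : r < 5 := by omega
  have hkey : Δ = dval r ∧ (1 ≤ m ∨ 3 ≤ r) := by
    have h20 : 4*(t+1) - 20*m = 4*r := by omega
    rcases hΔ with ⟨h,hD⟩|⟨h,hD⟩|⟨h,hD⟩|⟨h,hD⟩|⟨h,hD⟩
    · have hre : r = 0 := by omega
      exact ⟨by rw [hD, hre]; rfl, by left; omega⟩
    · have hre : r = 1 := by omega
      exact ⟨by rw [hD, hre]; rfl, by left; omega⟩
    · have hre : r = 2 := by omega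
      exact ⟨by rw [hD, hre]; rfl, by left; omega⟩
    · have hre : r = 3 := by omega
      exact ⟨by rw [hD, hre]; rfl, by right; omega⟩
    · have hre : r = 4 := by omega
      exact ⟨by rw [hD, hre]; rfl, by right; omega⟩
  have hfam := fam_balanced m r t hm hr5
  refine ⟨famS m r, hfam, ?_⟩
  intro π hπ
  obtain ⟨hπ1, hπ2, hπ3⟩ := hπ
  obtain ⟨hfam1, hfam2, hfam3, hfam4⟩ := hfam
  have hσ := sgn_pm m r π
  have hv : 4*(t+1) = 20*m + 4*r := by omega
  have hstep1 : totalSetDiscrepancy t (famS m r) π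
      = ∑ x ∈ Finset.Icc 1 (4*(t+1)), gA m r (sgn m r π) x * ddef π x := by
    unfold totalSetDiscrepancy
    rw [Finset.sum_congr rfl (pairTerm m r t π hm hr5 hfam4)]
    rw [← sum_pair_split (t+1) (fun k => ∑ x ∈ famS m r k, gA m r (sgn m r π) x * ddef π x)]
    rw [show 2*(t+1) = 2*t+2 by ring]
    rw [← Finset.sum_biUnion (by
      intro a ha b hb hab
      exact hfam2 a (Finset.mem_coe.mp ha) b (Finset.mem_coe.mp hb) hab), hfam3]
  rw [hstep1]
  have hbnd : ∀ x ∈ Finset.Icc 1 (4*(t+1)), |(π x : ℤ) - x| ≤ 2 := by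
    intro x hx; have := hπ3 x hx; exact_mod_cast this
  have hddneg : ∀ x ∈ Finset.Icc 1 (4*(t+1)), ddef π (π x) = - ddef π x := by
    intro x hx
    have h := hπ2 x hx
    have h2 : (π (π x) : ℤ) = x := by exact_mod_cast congrArg (Nat.cast : ℕ → ℤ) h
    unfold ddef; linarith
  have hPtoN : ∀ x ∈ (Finset.Icc 1 (4*(t+1))).filter (fun x => 0 < ddef π x),
      π x ∈ (Finset.Icc 1 (4*(t+1))).filter (fun x => ddef π x < 0) := by
    intro x hx
    obtain ⟨hxX, hdx⟩ := Finset.mem_filter.mp hx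
    refine Finset.mem_filter.mpr ⟨hπ1 x hxX, ?_⟩
    rw [hddneg x hxX]; linarith
  have hNtoP : ∀ x ∈ (Finset.Icc 1 (4*(t+1))).filter (fun x => ddef π x < 0),
      π x ∈ (Finset.Icc 1 (4*(t+1))).filter (fun x => 0 < ddef π x) := by
    intro x hx
    obtain ⟨hxX, hdx⟩ := Finset.mem_filter.mp hx
    refine Finset.mem_filter.mpr ⟨hπ1 x hxX, ?_⟩
    rw [hddneg x hxX]; linarith
  have hinvP : ∀ x ∈ (Finset.Icc 1 (4*(t+1))).filter (fun x => 0 < ddef π x), π (π x) = x := by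
    intro x hx; exact hπ2 x (Finset.mem_filter.mp hx).1
  have hinvN : ∀ x ∈ (Finset.Icc 1 (4*(t+1))).filter (fun x => ddef π x < 0), π (π x) = x := by
    intro x hx; exact hπ2 x (Finset.mem_filter.mp hx).1
  have hsplit : ∀ g : ℕ → ℤ,
      ∑ x ∈ (Finset.Icc 1 (4*(t+1))).filter (fun x => ddef π x < 0), g x
        = ∑ x ∈ (Finset.Icc 1 (4*(t+1))).filter (fun x => 0 < ddef π x), g (π x) := by
    intro g
    exact Finset.sum_nbij' π π hNtoP hPtoN hinvN hinvP (fun a ha => by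
      rw [hπ2 a (Finset.mem_filter.mp ha).1])
  have hzero : ∑ x ∈ Finset.Icc 1 (4*(t+1)), gA m r (sgn m r π) x * ddef π x
      = ∑ x ∈ (Finset.Icc 1 (4*(t+1))).filter (fun x => 0 < ddef π x),
          gA m r (sgn m r π) x * ddef π x
        + ∑ x ∈ (Finset.Icc 1 (4*(t+1))).filter (fun x => ddef π x < 0),
          gA m r (sgn m r π) x * ddef π x := by
    rw [← Finset.sum_filter_add_sum_filter_not (Finset.Icc 1 (4*(t+1)))
      (fun x => 0 < ddef π x) (fun x => gA m r (sgn m r π) x * ddef π x)]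
    congr 1
    have hsub : (((Finset.Icc 1 (4*(t+1))).filter (fun x => ¬ 0 < ddef π x)).filter
          (fun x => ddef π x < 0))
        = (Finset.Icc 1 (4*(t+1))).filter (fun x => ddef π x < 0) := by
      rw [Finset.filter_filter]
      apply Finset.filter_congr
      intro x _
      constructor
      · rintro ⟨_, h⟩; exact h
      · intro h; exact ⟨by linarith, h⟩
    rw [← hsub]
    refine (Finset.sum_filter_of_ne ?_).symm
    intro x hx hfx
    obtain ⟨hxX, hnp⟩ := Finset.mem_filter.mp hx
    have : ddef π x ≠ 0 := by
      intro h0; apply hfx; rw [h0]; ring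
    omega
  have hcov : ∀ x ∈ (Finset.Icc 1 (4*(t+1))).filter (fun x => 0 < ddef π x),
      gA m r (sgn m r π) x * ddef π x + gA m r (sgn m r π) (π x) * ddef π (π x)
        ≤ gY m r (sgn m r π) x + gY m r (sgn m r π) (π x) := by
    intro x hx
    obtain ⟨hxX, hdx⟩ := Finset.mem_filter.mp hx
    have hxI := Finset.mem_Icc.mp hxX
    have hπxI := Finset.mem_Icc.mp (hπ1 x hxX)
    have hb := hbnd x hxX
    rw [abs_le] at hb
    have hdd := hddneg x hxX
    have hπx : (π x : ℤ) = (x:ℤ) + ddef π x := by unfold ddef; ring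
    have hcase : (π x = x + 1 ∧ ddef π x = 1) ∨ (π x = x + 2 ∧ ddef π x = 2) := by
      unfold ddef at hdx ⊢; omega
    rcases hcase with ⟨he, hd⟩ | ⟨he, hd⟩
    · have h := cover m r (sgn m r π) hσ hr5 x 1 (by omega) (Or.inl rfl) (by omega)
      rw [he] at hdd ⊢
      rw [hd] at hdd
      rw [hd, hdd]
      push_cast at h
      linarith
    · have h := cover m r (sgn m r π) hσ hr5 x 2 (by omega) (Or.inr rfl) (by omega)
      rw [he] at hdd ⊢
      rw [hd] at hdd
      rw [hd, hdd]
      push_cast at h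
      linarith
  have hdisj : Disjoint ((Finset.Icc 1 (4*(t+1))).filter (fun x => 0 < ddef π x))
      ((Finset.Icc 1 (4*(t+1))).filter (fun x => ddef π x < 0)) := by
    rw [Finset.disjoint_left]
    intro x hx hx'
    have h1 := (Finset.mem_filter.mp hx).2
    have h2 := (Finset.mem_filter.mp hx').2
    linarith
  calc ∑ x ∈ Finset.Icc 1 (4*(t+1)), gA m r (sgn m r π) x * ddef π x
      = ∑ x ∈ (Finset.Icc 1 (4*(t+1))).filter (fun x => 0 < ddef π x),
          (gA m r (sgn m r π) x * ddef π x + gA m r (sgn m r π) (π x) * ddef π (π x)) := by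
        rw [hzero, hsplit (fun x => gA m r (sgn m r π) x * ddef π x),
          ← Finset.sum_add_distrib]
    _ ≤ ∑ x ∈ (Finset.Icc 1 (4*(t+1))).filter (fun x => 0 < ddef π x),
          (gY m r (sgn m r π) x + gY m r (sgn m r π) (π x)) := Finset.sum_le_sum hcov
    _ = ∑ x ∈ (Finset.Icc 1 (4*(t+1))).filter (fun x => 0 < ddef π x), gY m r (sgn m r π) x
        + ∑ x ∈ (Finset.Icc 1 (4*(t+1))).filter (fun x => ddef π x < 0), gY m r (sgn m r π) x := by
        rw [Finset.sum_add_distrib, hsplit (gY m r (sgn m r π))]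
    _ = ∑ x ∈ ((Finset.Icc 1 (4*(t+1))).filter (fun x => 0 < ddef π x))
          ∪ ((Finset.Icc 1 (4*(t+1))).filter (fun x => ddef π x < 0)), gY m r (sgn m r π) x :=
        (Finset.sum_union hdisj).symm
    _ ≤ ∑ x ∈ Finset.Icc 1 (4*(t+1)), gY m r (sgn m r π) x := by
        apply Finset.sum_le_sum_of_subset_of_nonneg
        · intro x hx
          rcases Finset.mem_union.mp hx with h | h
          · exact (Finset.mem_filter.mp h).1
          · exact (Finset.mem_filter.mp h).1
        · intro x hx _
          have hxI := Finset.mem_Icc.mp hx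
          exact gY_nonneg m r (sgn m r π) hr5 x hxI.1 (by omega)
    _ ≤ 26*(m:ℤ) + dval r := by
        rw [show (4*(t+1)) = 20*m+4*r from hv]
        exact sumYbound m r (sgn m r π) hr5 hkey.2
    _ = 26*(m:ℤ) + Δ := by rw [hkey.1]
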